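/- Let J be an unbounded subinterval of ℝ and g : J → ℝ such that g′ exists and is locally absolutely continuous on J, with second derivative g″ ∈ L^∞(J). If g′ ∈ L^1(J), then g′ ∈ L^∞(J) and ‖g′‖_{J,∞} ≤ 2·‖g′‖_{J,1}^{1/2}·‖g″‖_{J,∞}^{1/2}. -/

import Mathlib

open MeasureTheory Set

/-- Auxiliary estimate: if `|g'|` integrates to at most `M1` over `J`, `g'` is `M2`-Lipschitz
on `J`, and `Icc x (x+L) ⊆ J`, then `|g' x| * L - M2 * L^2 / 2 ≤ M1`. -/
lemma landau_aux_right (J : Set ℝ) (g' : ℝ → ℝ) (M1 M2 : ℝ) (hM2 : 0 ≤ M2)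
    (hInt : IntegrableOn (fun t => |g' t|) J volume)
    (hM1 : ∫ t in J, |g' t| ≤ M1)
    (hLip : ∀ a ∈ J, ∀ b ∈ J, |g' b - g' a| ≤ M2 * |b - a|)
    (x : ℝ) (hx : x ∈ J) (L : ℝ) (hL : 0 ≤ L) (hsub : Icc x (x + L) ⊆ J) :
    |g' x| * L - M2 * L ^ 2 / 2 ≤ M1 := by
  have hxL : x ≤ x + L := by linarith
  have huIcc : uIcc x (x + L) = Icc x (x + L) := uIcc_of_le hxL
  have hint1 : IntervalIntegrable (fun t => |g' t|) volume x (x + L) := by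
    apply IntegrableOn.intervalIntegrable
    rw [huIcc]
    exact hInt.mono_set hsub
  have hint2 : IntervalIntegrable (fun t => |g' x| - M2 * (t - x)) volume x (x + L) := by
    apply Continuous.intervalIntegrable
    continuity
  have hcompute : (∫ t in x..(x + L), (|g' x| - M2 * (t - x))) =
      |g' x| * L - M2 * L ^ 2 / 2 := by
    rw [intervalIntegral.integral_sub intervalIntegrable_const
      (by apply Continuous.intervalIntegrable; continuity)]
    rw [intervalIntegral.integral_const]
    rw [intervalIntegral.integral_const_mul]
    have h1 : (∫ t in x..(x + L), (t - x)) = L ^ 2 / 2 := by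
      rw [intervalIntegral.integral_comp_sub_right (fun s => s) x]
      simp [integral_id]
    rw [h1]
    simp
    ring
  have hmono : (∫ t in x..(x + L), (|g' x| - M2 * (t - x))) ≤
      ∫ t in x..(x + L), |g' t| := by
    apply intervalIntegral.integral_mono_on hxL hint2 hint1
    intro t ht
    have htJ : t ∈ J := hsub ht
    have h1 : |g' x| - |g' t| ≤ |g' t - g' x| := by
      have := abs_sub_abs_le_abs_sub (g' x) (g' t)
      rwa [abs_sub_comm] at this
    have h2 : |g' t - g' x| ≤ M2 * |t - x| := hLip x hx t htJ
    have h3 : |t - x| = t - x := abs_of_nonneg (by linarith [ht.1])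
    rw [h3] at h2
    linarith
  have hsubset : (∫ t in x..(x + L), |g' t|) ≤ ∫ t in J, |g' t| := by
    rw [intervalIntegral.integral_of_le hxL]
    apply setIntegral_mono_set hInt
    · exact Filter.Eventually.of_forall fun t => abs_nonneg _
    · exact Filter.Eventually.of_forall fun t ht => hsub (Ioc_subset_Icc_self ht)
  linarith

/-- Mirror version: `Icc (x - L) x ⊆ J`. -/
lemma landau_aux_left (J : Set ℝ) (g' : ℝ → ℝ) (M1 M2 : ℝ) (hM2 : 0 ≤ M2)
    (hInt : IntegrableOn (fun t => |g' t|) J volume)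
    (hM1 : ∫ t in J, |g' t| ≤ M1)
    (hLip : ∀ a ∈ J, ∀ b ∈ J, |g' b - g' a| ≤ M2 * |b - a|)
    (x : ℝ) (hx : x ∈ J) (L : ℝ) (hL : 0 ≤ L) (hsub : Icc (x - L) x ⊆ J) :
    |g' x| * L - M2 * L ^ 2 / 2 ≤ M1 := by
  have hxL : x - L ≤ x := by linarith
  have huIcc : uIcc (x - L) x = Icc (x - L) x := uIcc_of_le hxL
  have hint1 : IntervalIntegrable (fun t => |g' t|) volume (x - L) x := by
    apply IntegrableOn.intervalIntegrable
    rw [huIcc]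
    exact hInt.mono_set hsub
  have hint2 : IntervalIntegrable (fun t => |g' x| - M2 * (x - t)) volume (x - L) x := by
    apply Continuous.intervalIntegrable
    continuity
  have hcompute : (∫ t in (x - L)..x, (|g' x| - M2 * (x - t))) =
      |g' x| * L - M2 * L ^ 2 / 2 := by
    rw [intervalIntegral.integral_sub intervalIntegrable_const
      (by apply Continuous.intervalIntegrable; continuity)]
    rw [intervalIntegral.integral_const]
    rw [intervalIntegral.integral_const_mul]
    have h1 : (∫ t in (x - L)..x, (x - t)) = L ^ 2 / 2 := by
      have h2 : (∫ t in (x - L)..x, (x - t)) =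
          ∫ t in (x - L)..x, (x - t) := rfl
      have h3 : ∀ t : ℝ, x - t = x - t := fun _ => rfl
      rw [intervalIntegral.integral_sub intervalIntegrable_const
        (by apply Continuous.intervalIntegrable; continuity)]
      rw [intervalIntegral.integral_const]
      have h4 : (∫ t in (x - L)..x, t) = (x ^ 2 - (x - L) ^ 2) / 2 :=
        integral_id
      rw [h4]
      simp only [smul_eq_mul]
      ring
    rw [h1]
    simp
    ring
  have hmono : (∫ t in (x - L)..x, (|g' x| - M2 * (x - t))) ≤
      ∫ t in (x - L)..x, |g' t| := by
    apply intervalIntegral.integral_mono_on hxL hint2 hint1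
    intro t ht
    have htJ : t ∈ J := hsub ht
    have h1 : |g' x| - |g' t| ≤ |g' t - g' x| := by
      have := abs_sub_abs_le_abs_sub (g' x) (g' t)
      rwa [abs_sub_comm] at this
    have h2 : |g' t - g' x| ≤ M2 * |t - x| := hLip x hx t htJ
    have h3 : |t - x| = x - t := by
      rw [abs_sub_comm]
      exact abs_of_nonneg (by linarith [ht.2])
    rw [h3] at h2
    linarith
  have hsubset : (∫ t in (x - L)..x, |g' t|) ≤ ∫ t in J, |g' t| := by
    rw [intervalIntegral.integral_of_le hxL]
    apply setIntegral_mono_set hInt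
    · exact Filter.Eventually.of_forall fun t => abs_nonneg _
    · exact Filter.Eventually.of_forall fun t ht => hsub (Ioc_subset_Icc_self ht)
  linarith

/-- From `∀ L ≥ 0, c * L - M2 * L^2/2 ≤ M1` deduce `c ≤ 2 √M1 √M2`. -/
lemma landau_aux_numeric (c M1 M2 : ℝ) (hc : 0 ≤ c) (hM1 : 0 ≤ M1) (hM2 : 0 ≤ M2)
    (h : ∀ L : ℝ, 0 ≤ L → c * L - M2 * L ^ 2 / 2 ≤ M1) :
    c ≤ 2 * M1 ^ ((1 : ℝ) / 2) * M2 ^ ((1 : ℝ) / 2) := by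
  have hrhs : 0 ≤ 2 * M1 ^ ((1 : ℝ) / 2) * M2 ^ ((1 : ℝ) / 2) := by
    positivity
  rcases eq_or_lt_of_le hM2 with h0 | hpos
  · -- M2 = 0 : then c * L ≤ M1 for all L, so c = 0
    have hc0 : c ≤ 0 := by
      by_contra hcpos
      push_neg at hcpos
      have := h ((M1 + 1) / c) (by positivity)
      rw [← h0] at this
      have heq : c * ((M1 + 1) / c) = M1 + 1 := by
        field_simp
      rw [heq] at this
      linarith
    linarith
  · have hkey := h (c / M2) (by positivity)
    have hc2 : c ^ 2 ≤ 2 * M1 * M2 := by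
      have heq : c * (c / M2) - M2 * (c / M2) ^ 2 / 2 = c ^ 2 / (2 * M2) := by
        field_simp
        ring
      rw [heq] at hkey
      calc c ^ 2 = c ^ 2 / (2 * M2) * (2 * M2) := by field_simp
        _ ≤ M1 * (2 * M2) := by
            apply mul_le_mul_of_nonneg_right hkey
            positivity
        _ = 2 * M1 * M2 := by ring
    have h4 : c ^ 2 ≤ 4 * M1 * M2 := by nlinarith
    calc c = Real.sqrt (c ^ 2) := (Real.sqrt_sq hc).symm
      _ ≤ Real.sqrt (4 * M1 * M2) := Real.sqrt_le_sqrt h4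
      _ = 2 * M1 ^ ((1 : ℝ) / 2) * M2 ^ ((1 : ℝ) / 2) := by
          rw [Real.sqrt_mul (by positivity), Real.sqrt_mul (by norm_num)]
          rw [show Real.sqrt 4 = 2 by
            rw [show (4 : ℝ) = 2 ^ 2 by norm_num, Real.sqrt_sq (by norm_num)]]
          rw [Real.sqrt_eq_rpow, Real.sqrt_eq_rpow]

/-- **Corollary.** If `g : J → ℝ` (with `J` an unbounded interval) has a derivative `g'` that
is locally absolutely continuous with a.e. derivative `g''`, `g'' ∈ L^∞(J)` and
`g' ∈ L^1(J)`, then `g' ∈ L^∞(J)` and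
`‖g'‖_{J,∞} ≤ 2 ‖g'‖_{J,1}^{1/2} ‖g''‖_{J,∞}^{1/2}`. -/
theorem landau_one_inf
    (J : Set ℝ) (hJ : J.OrdConnected) (hJu : ¬ Bornology.IsBounded J)
    (g g' g'' : ℝ → ℝ)
    (hderiv : ∀ x ∈ J, HasDerivWithinAt g (g' x) J x)
    (hint : ∀ a ∈ J, ∀ b ∈ J, IntervalIntegrable g'' volume a b)
    (hftc : ∀ a ∈ J, ∀ b ∈ J, g' b - g' a = ∫ t in a..b, g'' t)
    (hg'' : MemLp g'' ⊤ (volume.restrict J))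
    (hg'1 : MemLp g' 1 (volume.restrict J)) :
    MemLp g' ⊤ (volume.restrict J) ∧
      (eLpNorm g' ⊤ (volume.restrict J)).toReal ≤
        2 * (eLpNorm g' 1 (volume.restrict J)).toReal ^ ((1 : ℝ) / 2) *
          (eLpNorm g'' ⊤ (volume.restrict J)).toReal ^ ((1 : ℝ) / 2) := by
  have hJm : MeasurableSet J := hJ.measurableSet
  set M1 := (eLpNorm g' 1 (volume.restrict J)).toReal with hM1def
  set M2 := (eLpNorm g'' ⊤ (volume.restrict J)).toReal with hM2def
  have hM1nn : 0 ≤ M1 := ENNReal.toReal_nonneg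
  have hM2nn : 0 ≤ M2 := ENNReal.toReal_nonneg
  -- a.e. bound on g'' over J
  have hae : ∀ᵐ t ∂(volume.restrict J), |g'' t| ≤ M2 := by
    have h1 : ∀ᵐ t ∂(volume.restrict J),
        (‖g'' t‖₊ : ENNReal) ≤ eLpNormEssSup g'' (volume.restrict J) := ae_le_eLpNormEssSup
    have hfin : eLpNormEssSup g'' (volume.restrict J) ≠ ⊤ := by
      rw [← eLpNorm_exponent_top]; exact hg''.2.ne
    filter_upwards [h1] with t ht
    have : ((‖g'' t‖₊ : ENNReal)).toReal ≤ (eLpNormEssSup g'' (volume.restrict J)).toReal :=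
      ENNReal.toReal_mono hfin ht
    simpa [hM2def, eLpNorm_exponent_top, Real.norm_eq_abs] using this
  -- Lipschitz bound on g'
  have hLip : ∀ a ∈ J, ∀ b ∈ J, |g' b - g' a| ≤ M2 * |b - a| := by
    intro a ha b hb
    rw [hftc a ha b hb, ← Real.norm_eq_abs]
    have hsub : uIoc a b ⊆ J := by
      intro t ht
      exact hJ.uIcc_subset ha hb (uIoc_subset_uIcc ht)
    have haeI : ∀ᵐ t ∂(volume.restrict (uIoc a b)), ‖g'' t‖ ≤ M2 := by
      have := ae_restrict_of_ae_restrict_of_subset hsub hae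
      filter_upwards [this] with t ht
      rwa [Real.norm_eq_abs]
    have := intervalIntegral.norm_integral_le_abs_of_norm_le haeI
      (intervalIntegrable_const (c := M2))
    apply this.trans
    rw [intervalIntegral.integral_const, smul_eq_mul, abs_mul, abs_of_nonneg hM2nn,
      mul_comm, abs_sub_comm]
  -- integrability and identification of M1
  have hInt : Integrable g' (volume.restrict J) := memLp_one_iff_integrable.mp hg'1
  have hIntAbs : IntegrableOn (fun t => |g' t|) J volume := by
    simpa [Real.norm_eq_abs, IntegrableOn] using hInt.norm
  have hM1eq : ∫ t in J, |g' t| = M1 := by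
    rw [hM1def, eLpNorm_one_eq_lintegral_enorm,
      ← integral_norm_eq_lintegral_enorm hInt.aestronglyMeasurable]
    simp [Real.norm_eq_abs]
  -- J is unbounded above or below
  have hub : ¬ BddBelow J ∨ ¬ BddAbove J := by
    by_contra hcon
    push_neg at hcon
    exact hJu (Metric.isBounded_of_bddAbove_of_bddBelow hcon.2 hcon.1)
  -- pointwise bound
  have key : ∀ x ∈ J, |g' x| ≤ 2 * M1 ^ ((1 : ℝ) / 2) * M2 ^ ((1 : ℝ) / 2) := by
    intro x hx
    apply landau_aux_numeric _ _ _ (abs_nonneg _) hM1nn hM2nn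
    intro L hL
    rcases hub with hb | ha
    · -- unbounded below: find y ∈ J with y ≤ x - L
      rw [bddBelow_def] at hb
      push_neg at hb
      obtain ⟨y, hy, hyx⟩ := hb (x - L)
      apply landau_aux_left J g' M1 M2 hM2nn hIntAbs hM1eq.le hLip x hx L hL
      intro t ht
      exact hJ.out hy hx ⟨by linarith [ht.1], ht.2⟩
    · rw [bddAbove_def] at ha
      push_neg at ha
      obtain ⟨y, hy, hyx⟩ := ha (x + L)
      apply landau_aux_right J g' M1 M2 hM2nn hIntAbs hM1eq.le hLip x hx L hL
      intro t ht
      exact hJ.out hx hy ⟨ht.1, by linarith [ht.2]⟩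
  set C := 2 * M1 ^ ((1 : ℝ) / 2) * M2 ^ ((1 : ℝ) / 2) with hCdef
  have hCnn : 0 ≤ C := by positivity
  have haeb : ∀ᵐ t ∂(volume.restrict J), ‖g' t‖ ≤ C := by
    rw [ae_restrict_iff' hJm]
    exact Filter.Eventually.of_forall fun t ht => by
      rw [Real.norm_eq_abs]; exact key t ht
  refine ⟨memLp_top_of_bound hg'1.aestronglyMeasurable C haeb, ?_⟩
  have h1 : eLpNorm g' ⊤ (volume.restrict J) ≤ ENNReal.ofReal C := by
    rw [eLpNorm_exponent_top]
    exact eLpNormEssSup_le_of_ae_bound haeb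
  calc (eLpNorm g' ⊤ (volume.restrict J)).toReal
      ≤ (ENNReal.ofReal C).toReal := ENNReal.toReal_mono ENNReal.ofReal_ne_top h1
    _ = C := ENNReal.toReal_ofReal hCnn
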